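/- Fix a finite independent exchange model in which ρ(e) + (1 − ρ(e))·φQ(e) ≤ φN(e) for every e ∈ E. Then with the failure-aware matching policy, the single-stage objective is monotonic in the set of queried edges: for all q, q'' ⊆ E with q ⊆ q'', V^FA(q) ≤ V^FA(q''). -/

import Mathlib

/-- A structure in an exchange is either a cycle or a chain. -/
inductive StructKind : Type
  | cycle : StructKind
  | chain : StructKind
  deriving DecidableEq

/-- A structure: a list of edges together with a cycle/chain tag. -/
abbrev ExchangeStruct (E : Type) := List E × StructKind

/-- A finite independent exchange model: a finite edge set `E`, nonnegative edge
weights `w`, a finite set `structs` of structures (lists of distinct edges tagged as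
cycles or chains), a nonempty finite collection `matchings` of feasible matchings
(subsets of `structs`), and per-edge probabilities `ρ e` (rejection if queried),
`φQ e` (post-match failure if queried and accepted), `φN e` (post-match failure if
not queried), all in `[0,1]`; all edges are independent. -/
structure ExchangeModel (E : Type) [Fintype E] [DecidableEq E] where
  w : E → ℝ
  w_nonneg : ∀ e, 0 ≤ w e
  structs : Finset (ExchangeStruct E)
  structs_nodup : ∀ c ∈ structs, c.1.Nodup
  matchings : Finset (Finset (ExchangeStruct E))
  matchings_nonempty : matchings.Nonempty
  matchings_sub : ∀ x ∈ matchings, x ⊆ structs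
  ρ : E → ℝ
  φQ : E → ℝ
  φN : E → ℝ
  ρ_mem : ∀ e, ρ e ∈ Set.Icc (0 : ℝ) 1
  φQ_mem : ∀ e, φQ e ∈ Set.Icc (0 : ℝ) 1
  φN_mem : ∀ e, φN e ∈ Set.Icc (0 : ℝ) 1

variable {E : Type} [Fintype E] [DecidableEq E]

/-- Expected final weight of a chain with edge list `es`:
`Σ_{k} w (e_k) · Π_{j ≤ k} s (e_j)`. -/
def chainVal (w s : E → ℝ) : List E → ℝ
  | [] => 0
  | e :: es => s e * (w e + chainVal w s es)

/-- Expected final weight `G c s` of a structure `c` under per-edge success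
probabilities `s`. -/
def structVal (w s : E → ℝ) (c : ExchangeStruct E) : ℝ :=
  match c.2 with
  | .cycle => (c.1.map w).sum * (c.1.map s).prod
  | .chain => chainVal w s c.1

/-- Per-edge success probabilities `s_{q,r}` for query set `q` and rejection set `r`. -/
def succProb (M : ExchangeModel E) (q r : Finset E) : E → ℝ :=
  fun e => if e ∈ r then 0 else if e ∈ q then 1 - M.φQ e else 1 - M.φN e

/-- Probability `P_q r` of rejection set `r ⊆ q`. -/
def rejProb (M : ExchangeModel E) (q r : Finset E) : ℝ :=
  (∏ e ∈ r, M.ρ e) * ∏ e ∈ q \ r, (1 - M.ρ e)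

/-- Expected final weight of a matching `x` under success probabilities `s`. -/
def matchVal (M : ExchangeModel E) (s : E → ℝ) (x : Finset (ExchangeStruct E)) : ℝ :=
  ∑ c ∈ x, structVal M.w s c

/-- The failure-aware optimal expected matching weight `max_{x ∈ M} Σ_{c ∈ x} G(c, s)`. -/
def bestVal (M : ExchangeModel E) (s : E → ℝ) : ℝ :=
  M.matchings.sup' M.matchings_nonempty (matchVal M s)

/-- The failure-aware value `V^FA q` of a query set `q`. -/
def VFA (M : ExchangeModel E) (q : Finset E) : ℝ :=
  ∑ r ∈ q.powerset, rejProb M q r * bestVal M (succProb M q r)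

/-- Nominal weight of (the edge list of) a chain under rejection set `r`: the summed
weight of all edges preceding the first rejected edge. -/
def chainNominal (w : E → ℝ) (r : Finset E) : List E → ℝ
  | [] => 0
  | e :: es => if e ∈ r then 0 else w e + chainNominal w r es

/-- Nominal weight `F c r` of a structure `c` under rejection set `r`. -/
def nominalVal (w : E → ℝ) (r : Finset E) (c : ExchangeStruct E) : ℝ :=
  match c.2 with
  | .cycle => if ∀ e ∈ c.1, e ∉ r then (c.1.map w).sum else 0
  | .chain => chainNominal w r c.1

/-- `m` is a max-weight selection for query set `q`: to each rejection set `r ⊆ q` it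
assigns a feasible matching maximizing the nominal weight `Σ_{c ∈ x} F(c, r)`. -/
def IsMaxWeightSelection (M : ExchangeModel E) (q : Finset E)
    (m : Finset E → Finset (ExchangeStruct E)) : Prop :=
  ∀ r ∈ q.powerset, m r ∈ M.matchings ∧
    ∀ x ∈ M.matchings, ∑ c ∈ x, nominalVal M.w r c ≤ ∑ c ∈ m r, nominalVal M.w r c

/-- The max-weight value `V^MAX (q; m)` of query set `q` under max-weight selection `m`. -/
def VMAX (M : ExchangeModel E) (q : Finset E)
    (m : Finset E → Finset (ExchangeStruct E)) : ℝ :=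
  ∑ r ∈ q.powerset, rejProb M q r * ∑ c ∈ m r, structVal M.w (succProb M q r) c

/-! ### Auxiliary lemmas -/

lemma chainVal_nonneg (w s : E → ℝ) (hw : ∀ e, 0 ≤ w e) (hs : ∀ e, 0 ≤ s e) :
    ∀ l : List E, 0 ≤ chainVal w s l
  | [] => le_refl 0
  | e :: es => by
      simp only [chainVal]
      exact mul_nonneg (hs e) (add_nonneg (hw e) (chainVal_nonneg w s hw hs es))

lemma chainVal_congr (w : E → ℝ) {s s' : E → ℝ} :
    ∀ l : List E, (∀ x ∈ l, s x = s' x) → chainVal w s l = chainVal w s' l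
  | [], _ => rfl
  | e :: es, h => by
      simp only [chainVal, h e (List.mem_cons_self),
        chainVal_congr w es (fun x hx => h x (List.mem_cons_of_mem e hx))]

lemma prod_affine (s : E → ℝ) (hs : ∀ x, 0 ≤ s x) (e : E) :
    ∀ l : List E, l.Nodup → ∃ A B : ℝ, 0 ≤ A ∧ 0 ≤ B ∧
      ∀ t : ℝ, (l.map (Function.update s e t)).prod = A + B * t
  | [], _ => ⟨1, 0, zero_le_one, le_refl 0, fun t => by simp⟩
  | f :: l, h => by
      have hf : f ∉ l := (List.nodup_cons.mp h).1
      have hl : l.Nodup := (List.nodup_cons.mp h).2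
      rcases eq_or_ne f e with rfl | hfe
      · refine ⟨0, (l.map s).prod, le_refl 0,
          List.prod_nonneg (by simpa using fun x _ => hs x), fun t => ?_⟩
        have : l.map (Function.update s f t) = l.map s :=
          List.map_congr_left fun x hx =>
            Function.update_of_ne (fun hxe => hf (by rwa [hxe] at hx)) t s
        simp [this, Function.update_self]
        ring
      · obtain ⟨A, B, hA, hB, hAB⟩ := prod_affine s hs e l hl
        refine ⟨s f * A, s f * B, mul_nonneg (hs f) hA, mul_nonneg (hs f) hB,
          fun t => ?_⟩
        simp [Function.update_of_ne hfe, hAB t]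
        ring

lemma chainVal_affine (w s : E → ℝ) (hw : ∀ x, 0 ≤ w x) (hs : ∀ x, 0 ≤ s x) (e : E) :
    ∀ l : List E, l.Nodup → ∃ A B : ℝ, 0 ≤ A ∧ 0 ≤ B ∧
      ∀ t : ℝ, chainVal w (Function.update s e t) l = A + B * t
  | [], _ => ⟨0, 0, le_refl 0, le_refl 0, fun t => by simp [chainVal]⟩
  | f :: l, h => by
      have hf : f ∉ l := (List.nodup_cons.mp h).1
      have hl : l.Nodup := (List.nodup_cons.mp h).2
      rcases eq_or_ne f e with rfl | hfe
      · refine ⟨0, w f + chainVal w s l,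
          le_refl 0, add_nonneg (hw f) (chainVal_nonneg w s hw hs l), fun t => ?_⟩
        have : chainVal w (Function.update s f t) l = chainVal w s l :=
          chainVal_congr w l fun x hx =>
            Function.update_of_ne (fun hxe => hf (by rwa [hxe] at hx)) t s
        simp [chainVal, this, Function.update_self]
        ring
      · obtain ⟨A, B, hA, hB, hAB⟩ := chainVal_affine w s hw hs e l hl
        refine ⟨s f * (w f + A), s f * B,
          mul_nonneg (hs f) (add_nonneg (hw f) hA), mul_nonneg (hs f) hB, fun t => ?_⟩
        simp [chainVal, Function.update_of_ne hfe, hAB t]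
        ring

lemma structVal_affine (w s : E → ℝ) (hw : ∀ x, 0 ≤ w x) (hs : ∀ x, 0 ≤ s x) (e : E)
    (c : ExchangeStruct E) (hc : c.1.Nodup) :
    ∃ A B : ℝ, 0 ≤ A ∧ 0 ≤ B ∧
      ∀ t : ℝ, structVal w (Function.update s e t) c = A + B * t := by
  obtain ⟨l, k⟩ := c
  cases k with
  | cycle =>
      obtain ⟨A, B, hA, hB, hAB⟩ := prod_affine s hs e l hc
      have hW : 0 ≤ (l.map w).sum := List.sum_nonneg (by simpa using fun x _ => hw x)
      exact ⟨(l.map w).sum * A, (l.map w).sum * B, mul_nonneg hW hA, mul_nonneg hW hB,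
        fun t => by simp [structVal, hAB t]; ring⟩
  | chain =>
      obtain ⟨A, B, hA, hB, hAB⟩ := chainVal_affine w s hw hs e l hc
      exact ⟨A, B, hA, hB, fun t => by simpa [structVal] using hAB t⟩

lemma matchVal_affine (M : ExchangeModel E) (s : E → ℝ) (hs : ∀ x, 0 ≤ s x) (e : E)
    (x : Finset (ExchangeStruct E)) (hx : ∀ c ∈ x, c.1.Nodup) :
    ∃ A B : ℝ, 0 ≤ A ∧ 0 ≤ B ∧
      ∀ t : ℝ, matchVal M (Function.update s e t) x = A + B * t := by
  classical
  induction x using Finset.induction_on with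
  | empty => exact ⟨0, 0, le_refl 0, le_refl 0, fun t => by simp [matchVal]⟩
  | @insert c y hc ih =>
      obtain ⟨A, B, hA, hB, hAB⟩ := ih fun d hd => hx d (Finset.mem_insert_of_mem hd)
      obtain ⟨A', B', hA', hB', hAB'⟩ := structVal_affine M.w s M.w_nonneg hs e c
        (hx c (Finset.mem_insert_self c y))
      refine ⟨A' + A, B' + B, add_nonneg hA' hA, add_nonneg hB' hB, fun t => ?_⟩
      simp [matchVal, Finset.sum_insert hc] at hAB ⊢
      rw [hAB' t, hAB t]; ring

lemma bestVal_key (M : ExchangeModel E) (s : E → ℝ) (hs : ∀ x, 0 ≤ s x) (e : E)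
    (t0 t1 ρe : ℝ) (hρ0 : 0 ≤ ρe) (hρ1 : ρe ≤ 1) (ht : t0 ≤ (1 - ρe) * t1) :
    bestVal M (Function.update s e t0) ≤
      ρe * bestVal M (Function.update s e 0) +
        (1 - ρe) * bestVal M (Function.update s e t1) := by
  classical
  obtain ⟨x, hx, hval⟩ := M.matchings.exists_mem_eq_sup' M.matchings_nonempty
    (matchVal M (Function.update s e t0))
  obtain ⟨A, B, hA, hB, hAB⟩ := matchVal_affine M s hs e x
    (fun c hc => M.structs_nodup c (M.matchings_sub x hx hc))
  have h0 : matchVal M (Function.update s e 0) x ≤ bestVal M (Function.update s e 0) :=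
    Finset.le_sup' _ hx
  have h1 : matchVal M (Function.update s e t1) x ≤ bestVal M (Function.update s e t1) :=
    Finset.le_sup' _ hx
  have key : matchVal M (Function.update s e t0) x ≤
      ρe * matchVal M (Function.update s e 0) x +
        (1 - ρe) * matchVal M (Function.update s e t1) x := by
    rw [hAB t0, hAB 0, hAB t1]
    nlinarith [mul_le_mul_of_nonneg_left ht hB]
  have hbest : bestVal M (Function.update s e t0) = matchVal M (Function.update s e t0) x :=
    hval
  rw [hbest]
  calc matchVal M (Function.update s e t0) x ≤ _ := key
    _ ≤ _ := add_le_add (mul_le_mul_of_nonneg_left h0 hρ0)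
      (mul_le_mul_of_nonneg_left h1 (by linarith))

lemma rejProb_nonneg (M : ExchangeModel E) (q r : Finset E) : 0 ≤ rejProb M q r :=
  mul_nonneg (Finset.prod_nonneg fun e _ => (M.ρ_mem e).1)
    (Finset.prod_nonneg fun e _ => by linarith [(M.ρ_mem e).2])

lemma succProb_nonneg (M : ExchangeModel E) (q r : Finset E) (x : E) :
    0 ≤ succProb M q r x := by
  unfold succProb
  split_ifs with h1 h2
  · exact le_refl 0
  · linarith [(M.φQ_mem x).2]
  · linarith [(M.φN_mem x).2]

lemma succProb_insert_left (M : ExchangeModel E) (q r : Finset E) (e : E) (he : e ∉ r) :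
    succProb M (insert e q) r = Function.update (succProb M q r) e (1 - M.φQ e) := by
  funext x
  rcases eq_or_ne x e with rfl | hxe
  · simp [succProb, Function.update_self, he]
  · simp [succProb, Function.update_of_ne hxe, Finset.mem_insert, hxe]

lemma succProb_insert_both (M : ExchangeModel E) (q r : Finset E) (e : E) :
    succProb M (insert e q) (insert e r) = Function.update (succProb M q r) e 0 := by
  funext x
  rcases eq_or_ne x e with rfl | hxe
  · simp [succProb, Function.update_self]
  · simp [succProb, Function.update_of_ne hxe, Finset.mem_insert, hxe]

lemma succProb_self_update (M : ExchangeModel E) (q r : Finset E) (e : E)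
    (heq : e ∉ q) (her : e ∉ r) :
    succProb M q r = Function.update (succProb M q r) e (1 - M.φN e) := by
  have : succProb M q r e = 1 - M.φN e := by simp [succProb, heq, her]
  rw [← this, Function.update_eq_self]

lemma rejProb_insert_left (M : ExchangeModel E) (q r : Finset E) (e : E)
    (heq : e ∉ q) (her : r ⊆ q) :
    rejProb M (insert e q) r = (1 - M.ρ e) * rejProb M q r := by
  have her' : e ∉ r := fun h => heq (her h)
  have hsd : insert e q \ r = insert e (q \ r) := by
    ext x
    by_cases hx : x = e <;> simp [hx, Finset.mem_insert, Finset.mem_sdiff, her', heq]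
  have hes : e ∉ q \ r := fun h => heq (Finset.mem_sdiff.mp h).1
  unfold rejProb
  rw [hsd, Finset.prod_insert hes]
  ring

lemma rejProb_insert_both (M : ExchangeModel E) (q r : Finset E) (e : E)
    (heq : e ∉ q) (her : r ⊆ q) :
    rejProb M (insert e q) (insert e r) = M.ρ e * rejProb M q r := by
  have her' : e ∉ r := fun h => heq (her h)
  have hsd : insert e q \ insert e r = q \ r := by
    ext x
    by_cases hx : x = e <;> simp [hx, Finset.mem_insert, Finset.mem_sdiff, her', heq]
  unfold rejProb
  rw [hsd, Finset.prod_insert her']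
  ring

lemma VFA_insert (M : ExchangeModel E)
    (h : ∀ e, M.ρ e + (1 - M.ρ e) * M.φQ e ≤ M.φN e)
    (q : Finset E) (e : E) (he : e ∉ q) : VFA M q ≤ VFA M (insert e q) := by
  classical
  have hdisj : Disjoint q.powerset (q.powerset.image (insert e)) := by
    rw [Finset.disjoint_left]
    intro r hr hr'
    obtain ⟨r', hr', rfl⟩ := Finset.mem_image.mp hr'
    exact he (Finset.mem_powerset.mp hr (Finset.mem_insert_self e r'))
  have hinj : ∀ a ∈ q.powerset, ∀ b ∈ q.powerset, insert e a = insert e b → a = b := by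
    intro a ha b hb hab
    have hea : e ∉ a := fun h' => he (Finset.mem_powerset.mp ha h')
    have heb : e ∉ b := fun h' => he (Finset.mem_powerset.mp hb h')
    rw [← Finset.erase_insert hea, ← Finset.erase_insert heb, hab]
  rw [VFA, VFA, Finset.powerset_insert, Finset.sum_union hdisj,
    Finset.sum_image hinj, ← Finset.sum_add_distrib]
  apply Finset.sum_le_sum
  intro r hr
  have hrq : r ⊆ q := Finset.mem_powerset.mp hr
  have her : e ∉ r := fun h' => he (hrq h')
  set s := succProb M q r with hs_def
  have hs : ∀ x, 0 ≤ s x := succProb_nonneg M q r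
  have key : bestVal M (Function.update s e (1 - M.φN e)) ≤
      M.ρ e * bestVal M (Function.update s e 0) +
        (1 - M.ρ e) * bestVal M (Function.update s e (1 - M.φQ e)) :=
    bestVal_key M s hs e _ _ _ (M.ρ_mem e).1 (M.ρ_mem e).2 (by nlinarith [h e])
  have e1 : s = Function.update s e (1 - M.φN e) :=
    succProb_self_update M q r e he her
  have e2 : succProb M (insert e q) r = Function.update s e (1 - M.φQ e) :=
    succProb_insert_left M q r e her
  have e3 : succProb M (insert e q) (insert e r) = Function.update s e 0 :=
    succProb_insert_both M q r e
  rw [e2, e3, rejProb_insert_left M q r e he hrq, rejProb_insert_both M q r e he hrq]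
  conv_lhs => rw [e1]
  have hP := rejProb_nonneg M q r
  calc rejProb M q r * bestVal M (Function.update s e (1 - M.φN e))
      ≤ rejProb M q r * (M.ρ e * bestVal M (Function.update s e 0) +
          (1 - M.ρ e) * bestVal M (Function.update s e (1 - M.φQ e))) :=
        mul_le_mul_of_nonneg_left key hP
    _ = (1 - M.ρ e) * rejProb M q r * bestVal M (Function.update s e (1 - M.φQ e)) +
        M.ρ e * rejProb M q r * bestVal M (Function.update s e 0) := by ring

/-- With the failure-aware matching policy, if querying cannot increase any edge's
overall probability of rejection or failure (`ρ e + (1 - ρ e) · φQ e ≤ φN e` for all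
`e`), then the single-stage objective is monotonic in the set of queried edges. -/
theorem VFA_monotone
    (M : ExchangeModel E)
    (h : ∀ e, M.ρ e + (1 - M.ρ e) * M.φQ e ≤ M.φN e)
    (q q'' : Finset E) (hsub : q ⊆ q'') :
    VFA M q ≤ VFA M q'' := by
  classical
  obtain ⟨d, hd⟩ : ∃ d, (q'' \ q).card = d := ⟨_, rfl⟩
  induction d generalizing q with
  | zero =>
      have hempty : q'' \ q = ∅ := Finset.card_eq_zero.mp hd
      have : q'' ⊆ q := fun x hx => by
        by_contra hxq
        exact absurd hempty (Finset.ne_empty_of_mem (Finset.mem_sdiff.mpr ⟨hx, hxq⟩))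
      rw [Finset.Subset.antisymm hsub this]
  | succ n ih =>
      obtain ⟨e, he⟩ : (q'' \ q).Nonempty := Finset.card_pos.mp (hd ▸ Nat.succ_pos n)
      obtain ⟨heq'', heq⟩ := Finset.mem_sdiff.mp he
      have h1 : VFA M q ≤ VFA M (insert e q) := VFA_insert M h q e heq
      have hsub' : insert e q ⊆ q'' := Finset.insert_subset heq'' hsub
      have hcard : (q'' \ insert e q).card = n := by
        have : q'' \ insert e q = (q'' \ q).erase e := by
          ext x; simp [Finset.mem_sdiff, Finset.mem_insert, Finset.mem_erase]; tauto
        rw [this, Finset.card_erase_of_mem he, hd]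
        rfl
      exact h1.trans (ih (insert e q) hsub' hcard)
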